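/- Let ε > 0, L > 0, θ ∈ [0, π/2), and let v ∈ W^{2,1}(0,L) satisfy v_x(0) = 0 and |v_x(L)| = tan θ. Then ∫₀^L [ ε κ_v² √(1+v_x²) + (1/ε)(√(1+v_x²) − 1) ] dx ≥ 4(√2 − √(1+cos θ)), where κ_v := v_xx / (1+v_x²)^{3/2} is the curvature of the graph of v. -/

import Mathlib

open Real Set MeasureTheory intervalIntegral


noncomputable def mmF (z : ℝ) : ℝ :=
  4 * (Real.sqrt 2 - Real.sqrt (1 + 1 / Real.sqrt (1 + z ^ 2)))

noncomputable def mmFd (z : ℝ) : ℝ :=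
  2 * z / ((Real.sqrt (1 + z ^ 2)) ^ 3 * Real.sqrt (1 + 1 / Real.sqrt (1 + z ^ 2)))

lemma mmF_hasDerivAt (z : ℝ) : HasDerivAt mmF (mmFd z) z := by
  have hpos : (0:ℝ) < 1 + z ^ 2 := by positivity
  set s := Real.sqrt (1 + z ^ 2) with hs
  have hs0 : 0 < s := Real.sqrt_pos.mpr hpos
  have hu0 : 0 < 1 + 1 / s := by positivity
  have h1 : HasDerivAt (fun z : ℝ => 1 + z ^ 2) (2 * z) z := by
    simpa using (hasDerivAt_pow 2 z).const_add 1
  have h2 : HasDerivAt (fun z : ℝ => Real.sqrt (1 + z ^ 2)) (2 * z / (2 * s)) z :=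
    h1.sqrt (by positivity)
  have h3 : HasDerivAt (fun z : ℝ => 1 + 1 / Real.sqrt (1 + z ^ 2))
      (-(2 * z / (2 * s)) / s ^ 2) z := by
    simpa [one_div] using (h2.inv hs0.ne').const_add 1
  have h4 : HasDerivAt (fun z : ℝ => Real.sqrt (1 + 1 / Real.sqrt (1 + z ^ 2)))
      ((-(2 * z / (2 * s)) / s ^ 2) / (2 * Real.sqrt (1 + 1 / s))) z :=
    h3.sqrt hu0.ne'
  have h5 := ((h4.const_sub (Real.sqrt 2)).const_mul 4)
  refine h5.congr_deriv ?_
  have hts : Real.sqrt (1 + 1 / s) ≠ 0 := by positivity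
  simp only [mmFd]
  field_simp
  ring

lemma mm_key (ε p q : ℝ) (hε : 0 < ε) :
    mmFd p * q ≤ ε * (q / (1 + p ^ 2) ^ ((3:ℝ)/2)) ^ 2 * Real.sqrt (1 + p ^ 2)
        + (1/ε) * (Real.sqrt (1 + p ^ 2) - 1) := by
  have hpos : (0:ℝ) < 1 + p ^ 2 := by positivity
  set s := Real.sqrt (1 + p ^ 2) with hsdef
  have hs0 : 0 < s := Real.sqrt_pos.mpr hpos
  have hs2 : s ^ 2 = 1 + p ^ 2 := Real.sq_sqrt hpos.le
  have hs1 : 1 ≤ s := by nlinarith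
  set t := Real.sqrt (1 + 1 / s) with htdef
  have ht0 : 0 < t := Real.sqrt_pos.mpr (by positivity)
  have ht2 : t ^ 2 = 1 + 1 / s := Real.sq_sqrt (by positivity)
  have hts : t ^ 2 * s = s + 1 := by
    rw [ht2]; field_simp
  have hrpow : (1 + p ^ 2) ^ ((3:ℝ)/2) = s ^ 3 := by
    rw [hsdef, Real.sqrt_eq_rpow, ← Real.rpow_natCast ((1 + p ^ 2) ^ ((1:ℝ)/2)) 3,
      ← Real.rpow_mul hpos.le]
    norm_num
  rw [hrpow, mmFd]
  rw [div_mul_eq_mul_div, div_le_iff₀ (by positivity)]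
  have hp2 : p ^ 2 = (s - 1) * (t ^ 2 * s) := by rw [hts]; nlinarith
  have hkey : ((ε * (q / s ^ 3) ^ 2 * s + 1 / ε * (s - 1)) * (s ^ 3 * t) - 2 * p * q)
      * (ε * s ^ 2 * t) = (ε * q * t - p * s ^ 2) ^ 2 := by
    field_simp
    linear_combination (-(s ^ 4)) * hp2
  nlinarith [sq_nonneg (ε * q * t - p * s ^ 2), mul_pos (mul_pos hε (pow_pos hs0 2)) ht0, hkey]

/-- the Modica–Mortola type lower bound
`∫₀^L ε κ_v² √(1+v'²) + (1/ε)(√(1+v'²) − 1) dx ≥ 4(√2 − √(1+cos θ))`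
for `v ∈ W^{2,1}(0,L)` with `v'(0) = 0` and `|v'(L)| = tan θ`, `θ ∈ [0,π/2)`.
`W^{2,1}` is modelled as twice (everywhere) differentiable with interval-integrable
energy density. -/
theorem modica_mortola_lower_bound
    (ε L θ : ℝ) (hε : 0 < ε) (hL : 0 < L) (hθ : θ ∈ Ico (0:ℝ) (π / 2))
    (v : ℝ → ℝ)
    (hv₁ : ∀ x, DifferentiableAt ℝ v x)
    (hv₂ : ∀ x, DifferentiableAt ℝ (deriv v) x)
    (hint : IntervalIntegrable (fun x =>
      ε * (deriv (deriv v) x / (1 + (deriv v x) ^ 2) ^ ((3:ℝ)/2)) ^ 2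
          * Real.sqrt (1 + (deriv v x) ^ 2)
        + (1/ε) * (Real.sqrt (1 + (deriv v x) ^ 2) - 1)) volume 0 L)
    (hv0 : deriv v 0 = 0) (hvL : |deriv v L| = Real.tan θ) :
    (∫ x in (0:ℝ)..L,
        ε * (deriv (deriv v) x / (1 + (deriv v x) ^ 2) ^ ((3:ℝ)/2)) ^ 2
            * Real.sqrt (1 + (deriv v x) ^ 2)
          + (1/ε) * (Real.sqrt (1 + (deriv v x) ^ 2) - 1))
      ≥ 4 * (Real.sqrt 2 - Real.sqrt (1 + Real.cos θ)) := by

  set E : ℝ → ℝ := fun x =>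
      ε * (deriv (deriv v) x / (1 + (deriv v x) ^ 2) ^ ((3:ℝ)/2)) ^ 2
          * Real.sqrt (1 + (deriv v x) ^ 2)
        + (1/ε) * (Real.sqrt (1 + (deriv v x) ^ 2) - 1) with hE
  set G : ℝ → ℝ := fun x => mmF (deriv v x) with hGdef
  have hG : ∀ x, HasDerivAt G (mmFd (deriv v x) * deriv (deriv v) x) x := fun x =>
    (mmF_hasDerivAt (deriv v x)).comp x (hv₂ x).hasDerivAt
  have hone_le : ∀ p : ℝ, (1:ℝ) ≤ Real.sqrt (1 + p ^ 2) := by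
    intro p
    have := Real.sqrt_le_sqrt (show (1:ℝ) ≤ 1 + p ^ 2 by nlinarith)
    simpa using this
  have hEnn : ∀ x, 0 ≤ E x := by
    intro x
    have h1 := hone_le (deriv v x)
    have : (0:ℝ) ≤ ε * (deriv (deriv v) x / (1 + (deriv v x) ^ 2) ^ ((3:ℝ)/2)) ^ 2
        * Real.sqrt (1 + (deriv v x) ^ 2) := by positivity
    have h2 : (0:ℝ) ≤ (1/ε) * (Real.sqrt (1 + (deriv v x) ^ 2) - 1) := by
      apply mul_nonneg (by positivity); linarith
    simp only [hE]; linarith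
  have hbound : ∀ x, deriv G x ≤ E x := by
    intro x
    rw [(hG x).deriv]
    exact mm_key ε _ _ hε
  have habs : ∀ x, |deriv G x| ≤ E x := by
    intro x
    rw [(hG x).deriv]
    refine abs_le.mpr ⟨?_, mm_key ε _ _ hε⟩
    have h := mm_key ε (deriv v x) (-(deriv (deriv v) x)) hε
    simp only [mul_neg, neg_div, neg_sq] at h
    simp only [hE]
    linarith
  have hGint : IntervalIntegrable (deriv G) volume 0 L := by
    apply hint.mono_fun ((stronglyMeasurable_deriv G).aestronglyMeasurable).restrict
    filter_upwards with x
    simp only [Real.norm_eq_abs]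
    rw [abs_of_nonneg (hEnn x)]
    exact habs x
  have hmono : (∫ x in (0:ℝ)..L, deriv G x) ≤ ∫ x in (0:ℝ)..L, E x :=
    intervalIntegral.integral_mono_on hL.le hGint hint (fun x _ => hbound x)
  have hFTC : (∫ x in (0:ℝ)..L, deriv G x) = G L - G 0 :=
    intervalIntegral.integral_deriv_eq_sub (fun x _ => (hG x).differentiableAt) hGint
  have hG0 : G 0 = 0 := by
    simp only [hGdef, mmF, hv0]
    norm_num
  have hGL : G L = 4 * (Real.sqrt 2 - Real.sqrt (1 + Real.cos θ)) := by
    have hcos : 0 < Real.cos θ :=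
      Real.cos_pos_of_mem_Ioo ⟨by linarith [hθ.1, Real.pi_pos], hθ.2⟩
    have hsq : (deriv v L) ^ 2 = Real.tan θ ^ 2 := by rw [← sq_abs, hvL]
    have h1 : 1 / Real.sqrt (1 + (deriv v L) ^ 2) = Real.cos θ := by
      rw [hsq, one_div, Real.inv_sqrt_one_add_tan_sq hcos]
    simp only [hGdef, mmF, h1]
  rw [hFTC, hG0, hGL] at hmono
  simpa using hmono.trans_eq' (by ring)
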